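/- arXiv:2204.03264 — 2 statements merged into one kernel-verified Lean document; each statement's English description precedes it below -/
import Mathlib

section
/- Define t₀(s, N) = sign(N - μ(s))·√(2(μ(s) - N + N·ln(N/μ(s)))) for μ(s) > 0 and integer N ≥ 0, with the convention 0·ln 0 = 0. Then for fixed μ > 0, t₀ is monotone increasing in N: t₀(s, N+1) ≥ t₀(s, N) for all N ≥ 0. -/
/-- The signed Poisson likelihood-ratio statistic `t₀`. -/
noncomputable def t0 (μ : ℝ) (N : ℕ) : ℝ :=
  Real.sign ((N : ℝ) - μ) *
    Real.sqrt (2 * (μ - (N : ℝ) + (N : ℝ) * Real.log ((N : ℝ) / μ)))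

/-- for fixed μ > 0, t₀ is monotone increasing in N. -/
theorem stmt_3 (μ : ℝ) (hμ : 0 < μ) (N : ℕ) : t0 μ N ≤ t0 μ (N + 1) := by
  set h : ℝ → ℝ := fun x => μ - x + x * Real.log x - x * Real.log μ with hh
  have hG : ∀ x : ℝ, 0 ≤ x → μ - x + x * Real.log (x / μ) = h x := by
    intro x hx
    rcases eq_or_lt_of_le hx with h0 | h0
    · simp [hh, ← h0]
    · rw [Real.log_div (ne_of_gt h0) (ne_of_gt hμ)]
      simp only [hh]; ring
  have hcont : Continuous h :=
    ((continuous_const.sub continuous_id).add Real.continuous_mul_log).sub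
      (continuous_id.mul continuous_const)
  have hderiv : ∀ x : ℝ, 0 < x → HasDerivAt h (Real.log x - Real.log μ) x := by
    intro x hx
    have h1 : HasDerivAt (fun x : ℝ => μ - x) (-1) x := (hasDerivAt_id x).const_sub μ
    have h2 := Real.hasDerivAt_mul_log (ne_of_gt hx)
    have h3 : HasDerivAt (fun x : ℝ => x * Real.log μ) (Real.log μ) x := by
      simpa using (hasDerivAt_id x).mul_const (Real.log μ)
    have := (h1.add h2).sub h3
    rw [show Real.log x - Real.log μ = -1 + (Real.log x + 1) - Real.log μ by ring]
    exact this
  have hmono : StrictMonoOn h (Set.Ici μ) := by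
    apply strictMonoOn_of_deriv_pos (convex_Ici μ) hcont.continuousOn
    intro x hx
    rw [interior_Ici] at hx
    rw [(hderiv x (hμ.trans hx)).deriv, sub_pos]
    exact Real.log_lt_log hμ hx
  have hanti : AntitoneOn h (Set.Icc 0 μ) := by
    apply antitoneOn_of_deriv_nonpos (convex_Icc 0 μ) hcont.continuousOn
    · intro x hx
      rw [interior_Icc] at hx
      exact (hderiv x hx.1).differentiableAt.differentiableWithinAt
    · intro x hx
      rw [interior_Icc] at hx
      rw [(hderiv x hx.1).deriv, sub_nonpos]
      exact Real.log_le_log hx.1 hx.2.le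
  have hμ0 : h μ = 0 := by simp only [hh]; ring
  have L1 : ∀ x : ℝ, μ ≤ x →
      Real.sign (x - μ) * Real.sqrt (2 * (μ - x + x * Real.log (x / μ))) =
        Real.sqrt (2 * h x) := by
    intro x hx
    rw [hG x (hμ.le.trans hx)]
    rcases eq_or_lt_of_le hx with he | hlt
    · rw [← he, hμ0]
      simp
    · rw [Real.sign_of_pos (by linarith), one_mul]
  have L2 : ∀ x : ℝ, 0 ≤ x → x ≤ μ →
      Real.sign (x - μ) * Real.sqrt (2 * (μ - x + x * Real.log (x / μ))) =
        -Real.sqrt (2 * h x) := by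
    intro x hx0 hx
    rw [hG x hx0]
    rcases eq_or_lt_of_le hx with he | hlt
    · rw [he, hμ0]
      simp
    · rw [Real.sign_of_neg (by linarith)]
      ring
  unfold t0
  push_cast
  have hN0 : (0 : ℝ) ≤ (N : ℝ) := Nat.cast_nonneg N
  rcases le_or_gt μ (N : ℝ) with hc | hc
  · rw [L1 _ hc, L1 _ (by linarith)]
    apply Real.sqrt_le_sqrt
    have := (hmono (Set.mem_Ici.mpr hc)
      (Set.mem_Ici.mpr (show μ ≤ (N : ℝ) + 1 by linarith))
      (show (N : ℝ) < (N : ℝ) + 1 by linarith)).le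
    linarith
  · rcases le_or_gt ((N : ℝ) + 1) μ with hc1 | hc1
    · rw [L2 _ hN0 hc.le, L2 _ (by linarith) hc1]
      apply neg_le_neg
      apply Real.sqrt_le_sqrt
      have := hanti (Set.mem_Icc.mpr ⟨hN0, hc.le⟩)
        (Set.mem_Icc.mpr ⟨by linarith, hc1⟩)
        (show (N : ℝ) ≤ (N : ℝ) + 1 by linarith)
      linarith
    · rw [L2 _ hN0 hc.le, L1 _ hc1.le]
      exact le_trans (neg_nonpos.mpr (Real.sqrt_nonneg _)) (Real.sqrt_nonneg _)
end

section
/- Define t₀(μ, N) = sign(N - μ)·√(2(μ - N + N·ln(N/μ))) for μ > 0 and integer N ≥ 0 (with 0·ln 0 = 0). Then for fixed N, t₀ is monotone decreasing in μ: if 0 < μ₁ ≤ μ₂ then t₀(μ₂, N) ≤ t₀(μ₁, N). -/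
private lemma t0_eq_pos (μ : ℝ) (N : ℕ) (hμ : 0 < μ) (h : μ ≤ (N : ℝ)) :
    t0 μ N = Real.sqrt (2 * (μ - (N : ℝ) + (N : ℝ) * Real.log ((N : ℝ) / μ))) := by
  rcases lt_or_eq_of_le h with h' | h'
  · unfold t0
    rw [Real.sign_of_pos (by linarith), one_mul]
  · unfold t0
    rw [← h', sub_self, Real.sign_zero, zero_mul, div_self (ne_of_gt hμ), Real.log_one]
    simp

private lemma t0_eq_neg (μ : ℝ) (N : ℕ) (hμ : 0 < μ) (h : (N : ℝ) ≤ μ) :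
    t0 μ N = -Real.sqrt (2 * (μ - (N : ℝ) + (N : ℝ) * Real.log ((N : ℝ) / μ))) := by
  rcases lt_or_eq_of_le h with h' | h'
  · unfold t0
    rw [Real.sign_of_neg (by linarith), neg_one_mul]
  · unfold t0
    rw [h', sub_self, Real.sign_zero, zero_mul, div_self (ne_of_gt hμ), Real.log_one]
    simp

private lemma f_nonneg (μ : ℝ) (N : ℕ) (hμ : 0 < μ) :
    0 ≤ μ - (N : ℝ) + (N : ℝ) * Real.log ((N : ℝ) / μ) := by
  rcases Nat.eq_zero_or_pos N with h | h
  · subst h; simp; linarith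
  · have hn : (0 : ℝ) < N := by exact_mod_cast h
    have hlog : Real.log (μ / (N : ℝ)) ≤ μ / (N : ℝ) - 1 :=
      Real.log_le_sub_one_of_pos (by positivity)
    have e : Real.log ((N : ℝ) / μ) = Real.log (N : ℝ) - Real.log μ :=
      Real.log_div (ne_of_gt hn) (ne_of_gt hμ)
    have e2 : Real.log (μ / (N : ℝ)) = Real.log μ - Real.log (N : ℝ) :=
      Real.log_div (ne_of_gt hμ) (ne_of_gt hn)
    rw [e2] at hlog
    rw [e]
    have hdiv : μ / (N : ℝ) - 1 = (μ - N) / N := by field_simp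
    rw [hdiv] at hlog
    have hm := mul_le_mul_of_nonneg_left hlog (le_of_lt hn)
    have hq : (N : ℝ) * ((μ - N) / N) = μ - N := by field_simp
    nlinarith

/-- for fixed N, t₀ is monotone decreasing in μ. -/
theorem stmt_4 (N : ℕ) (μ₁ μ₂ : ℝ) (h₁ : 0 < μ₁) (h₁₂ : μ₁ ≤ μ₂) :
    t0 μ₂ N ≤ t0 μ₁ N := by
  have h₂ : 0 < μ₂ := lt_of_lt_of_le h₁ h₁₂
  rcases le_or_gt μ₂ (N : ℝ) with hb | hb
  · -- both in (0, N]
    have hn : (0 : ℝ) < N := lt_of_lt_of_le h₂ hb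
    rw [t0_eq_pos μ₁ N h₁ (le_trans h₁₂ hb), t0_eq_pos μ₂ N h₂ hb]
    apply Real.sqrt_le_sqrt
    have hlog : Real.log (μ₁ / μ₂) ≤ μ₁ / μ₂ - 1 :=
      Real.log_le_sub_one_of_pos (by positivity)
    have e1 : Real.log ((N : ℝ) / μ₂) = Real.log (N : ℝ) - Real.log μ₂ :=
      Real.log_div (ne_of_gt hn) (ne_of_gt h₂)
    have e2 : Real.log ((N : ℝ) / μ₁) = Real.log (N : ℝ) - Real.log μ₁ :=
      Real.log_div (ne_of_gt hn) (ne_of_gt h₁)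
    have e3 : Real.log (μ₁ / μ₂) = Real.log μ₁ - Real.log μ₂ :=
      Real.log_div (ne_of_gt h₁) (ne_of_gt h₂)
    rw [e3] at hlog
    rw [e1, e2]
    -- need: μ₂ - μ₁ ≤ N * (log μ₂ - log μ₁)
    -- from hlog: log μ₂ - log μ₁ ≥ 1 - μ₁/μ₂ = (μ₂-μ₁)/μ₂, and N ≥ μ₂
    have key : (μ₂ - μ₁) / μ₂ ≤ Real.log μ₂ - Real.log μ₁ := by
      have : μ₁ / μ₂ - 1 = -((μ₂ - μ₁) / μ₂) := by field_simp; ring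
      linarith [this ▸ hlog]
    have hNlog : (N : ℝ) * ((μ₂ - μ₁) / μ₂) ≤ (N : ℝ) * (Real.log μ₂ - Real.log μ₁) :=
      mul_le_mul_of_nonneg_left key (le_of_lt hn)
    have h5 : μ₂ - μ₁ ≤ (N : ℝ) * ((μ₂ - μ₁) / μ₂) := by
      rw [mul_div_assoc']
      rw [le_div_iff₀ h₂]
      nlinarith
    nlinarith
  · rcases le_or_gt (N : ℝ) μ₁ with ha | ha
    · -- both in [N, ∞)
      rw [t0_eq_neg μ₁ N h₁ ha, t0_eq_neg μ₂ N h₂ (le_trans ha h₁₂)]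
      apply neg_le_neg
      apply Real.sqrt_le_sqrt
      have hn : (0 : ℝ) ≤ N := Nat.cast_nonneg N
      have hlog : Real.log (μ₂ / μ₁) ≤ μ₂ / μ₁ - 1 :=
        Real.log_le_sub_one_of_pos (by positivity)
      rcases Nat.eq_zero_or_pos N with h0 | h0
      · subst h0; simp; linarith
      have hnp : (0 : ℝ) < N := by exact_mod_cast h0
      have e1 : Real.log ((N : ℝ) / μ₂) = Real.log (N : ℝ) - Real.log μ₂ :=
        Real.log_div (ne_of_gt hnp) (ne_of_gt h₂)
      have e2 : Real.log ((N : ℝ) / μ₁) = Real.log (N : ℝ) - Real.log μ₁ :=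
        Real.log_div (ne_of_gt hnp) (ne_of_gt h₁)
      have e3 : Real.log (μ₂ / μ₁) = Real.log μ₂ - Real.log μ₁ :=
        Real.log_div (ne_of_gt h₂) (ne_of_gt h₁)
      rw [e3] at hlog
      rw [e1, e2]
      -- need: N * (log μ₂ - log μ₁) ≤ μ₂ - μ₁
      have key : Real.log μ₂ - Real.log μ₁ ≤ (μ₂ - μ₁) / μ₁ := by
        have : μ₂ / μ₁ - 1 = (μ₂ - μ₁) / μ₁ := by field_simp
        linarith [this ▸ hlog]
      have hlogpos : 0 ≤ Real.log μ₂ - Real.log μ₁ := by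
        simp only [sub_nonneg]
        exact Real.log_le_log h₁ h₁₂
      have h5 : (N : ℝ) * (Real.log μ₂ - Real.log μ₁) ≤ μ₁ * (Real.log μ₂ - Real.log μ₁) :=
        mul_le_mul_of_nonneg_right ha hlogpos
      have h6 : μ₁ * ((μ₂ - μ₁) / μ₁) = μ₂ - μ₁ := by field_simp
      nlinarith [mul_le_mul_of_nonneg_left key (le_of_lt h₁)]
    · -- μ₁ < N < μ₂
      rw [t0_eq_neg μ₂ N h₂ (le_of_lt hb), t0_eq_pos μ₁ N h₁ (le_of_lt ha)]
      have := Real.sqrt_nonneg (2 * (μ₂ - (N : ℝ) + (N : ℝ) * Real.log ((N : ℝ) / μ₂)))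
      have := Real.sqrt_nonneg (2 * (μ₁ - (N : ℝ) + (N : ℝ) * Real.log ((N : ℝ) / μ₁)))
      linarith
end
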